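/- For λ ∈ (-1,1) and N ≥ 3, the real symmetric matrix P_{N-1} defined by P_{N-1}(k, N-k) = 1-λ for k ∈ {1, N-1}, P_{N-1}(k, N-k) = 1 for 2 ≤ k ≤ N-2, P_{N-1}(k, N+2-k) = 1-λ for k ∈ {2, N}, P_{N-1}(k, N+2-k) = 1 for 3 ≤ k ≤ N-1, and zeros elsewhere, satisfies H(λ)ᵀ P_{N-1} = P_{N-1} H(λ). -/
import Mathlib

open Matrix Polynomial

/-- The N×N discrete PT-symmetric square-well Hamiltonian (0-indexed). -/
noncomputable def Ham (N : ℕ) (l : ℝ) : Matrix (Fin N) (Fin N) ℝ :=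
  Matrix.of fun i j =>
    if (i : ℕ) = j then 2
    else if (j : ℕ) = (i : ℕ) + 1 then
      (if (i : ℕ) = 0 then -1 - l else if (j : ℕ) = N - 1 then -1 + l else -1)
    else if (i : ℕ) = (j : ℕ) + 1 then
      (if (j : ℕ) = 0 then -1 + l else if (i : ℕ) = N - 1 then -1 - l else -1)
    else 0

/-- The anti-bidiagonal pseudometric (0-indexed: antidiagonals i+j = N-2 and i+j = N). -/
noncomputable def Pantibi (N : ℕ) (l : ℝ) : Matrix (Fin N) (Fin N) ℝ :=
  Matrix.of fun i j =>
    if (i : ℕ) + (j : ℕ) = N - 2 then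
      (if (i : ℕ) = 0 ∨ (j : ℕ) = 0 then 1 - l else 1)
    else if (i : ℕ) + (j : ℕ) = N then
      (if (i : ℕ) = N - 1 ∨ (j : ℕ) = N - 1 then 1 - l else 1)
    else 0

/- Scalar (ℕ-indexed) versions of the matrix entries. -/
noncomputable def hS (N : ℕ) (l : ℝ) (i j : ℕ) : ℝ :=
  if i = j then 2
  else if j = i + 1 then (if i = 0 then -1 - l else if j = N - 1 then -1 + l else -1)
  else if i = j + 1 then (if j = 0 then -1 + l else if i = N - 1 then -1 - l else -1)
  else 0

noncomputable def pS (N : ℕ) (l : ℝ) (i j : ℕ) : ℝ :=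
  if i + j = N - 2 then (if i = 0 ∨ j = 0 then 1 - l else 1)
  else if i + j = N then (if i = N - 1 ∨ j = N - 1 then 1 - l else 1)
  else 0

lemma hS_zero (N : ℕ) (l : ℝ) {i j : ℕ} (h1 : i + 1 ≠ j) (h2 : i ≠ j) (h3 : i ≠ j + 1) :
    hS N l i j = 0 := by
  unfold hS; split_ifs <;> first | rfl | omega

lemma hS_diag (N : ℕ) (l : ℝ) (m : ℕ) : hS N l m m = 2 := by
  unfold hS; simp

lemma hS_A (N : ℕ) (hN : 3 ≤ N) (l : ℝ) (m : ℕ) (hm : 1 ≤ m) :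
    hS N l (m - 1) m = if m = 1 then -1 - l else if m = N - 1 then -1 + l else -1 := by
  unfold hS; split_ifs <;> first | rfl | omega

lemma hS_B (N : ℕ) (hN : 3 ≤ N) (l : ℝ) (m : ℕ) :
    hS N l (m + 1) m = if m = 0 then -1 + l else if m = N - 2 then -1 - l else -1 := by
  unfold hS; split_ifs <;> first | rfl | omega

lemma pS_zero (N : ℕ) (l : ℝ) (i j : ℕ) (h1 : i + j ≠ N - 2) (h2 : i + j ≠ N) :
    pS N l i j = 0 := by
  unfold pS; rw [if_neg h1, if_neg h2]

lemma pS_lo (N : ℕ) (l : ℝ) (i j : ℕ) (hc : i + j = N - 2) :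
    pS N l i j = if i = 0 ∨ j = 0 then 1 - l else 1 := by
  unfold pS; rw [if_pos hc]

lemma pS_hi (N : ℕ) (hN : 3 ≤ N) (l : ℝ) (i j : ℕ) (hc : i + j = N) :
    pS N l i j = if i = N - 1 ∨ j = N - 1 then 1 - l else 1 := by
  unfold pS; rw [if_neg (by omega), if_pos hc]

lemma tri_sum (N : ℕ) (hN : 3 ≤ N) (f : ℕ → ℝ) (m : ℕ) (hm : m < N)
    (h0 : ∀ k, k < N → k + 1 ≠ m → k ≠ m → k ≠ m + 1 → f k = 0) :
    ∑ k ∈ Finset.range N, f k =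
      (if m = 0 then 0 else f (m - 1)) + f m + (if m + 1 < N then f (m + 1) else 0) := by
  have key : ∑ k ∈ Finset.range N, f k
      = ∑ k ∈ (Finset.range N).filter (fun k => k + 1 = m ∨ k = m ∨ k = m + 1), f k := by
    rw [Finset.sum_filter_of_ne]
    intro k hk hfk
    by_contra hc
    push_neg at hc
    exact hfk (h0 k (Finset.mem_range.mp hk) hc.1 hc.2.1 hc.2.2)
  rw [key]
  rcases Nat.eq_zero_or_pos m with hm0 | hm0
  · subst hm0
    have hset : (Finset.range N).filter (fun k => k + 1 = 0 ∨ k = 0 ∨ k = 0 + 1)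
        = {0, 1} := by
      ext k
      simp only [Finset.mem_filter, Finset.mem_range, Finset.mem_insert, Finset.mem_singleton]
      omega
    rw [hset, Finset.sum_pair (by omega)]
    have h1N : 0 + 1 < N := by omega
    simp [h1N]
  · rcases Nat.lt_or_ge (m + 1) N with hmN | hmN
    · have hset : (Finset.range N).filter (fun k => k + 1 = m ∨ k = m ∨ k = m + 1)
          = {m - 1, m, m + 1} := by
        ext k
        simp only [Finset.mem_filter, Finset.mem_range, Finset.mem_insert, Finset.mem_singleton]
        omega
      rw [hset, Finset.sum_insert (by simp; omega), Finset.sum_pair (by omega)]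
      have hm0' : m ≠ 0 := by omega
      simp [hm0', hmN]; ring
    · have hset : (Finset.range N).filter (fun k => k + 1 = m ∨ k = m ∨ k = m + 1)
          = {m - 1, m} := by
        ext k
        simp only [Finset.mem_filter, Finset.mem_range, Finset.mem_insert, Finset.mem_singleton]
        omega
      rw [hset, Finset.sum_pair (by omega)]
      have h1 : m ≠ 0 := by omega
      have h2 : ¬ (m + 1 < N) := by omega
      simp [h1, h2]

set_option maxHeartbeats 4000000 in
lemma final' (N : ℕ) (hN : 3 ≤ N) (l : ℝ) (i j : ℕ) (hi : i < N) (hj : j < N) :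
    (if i = 0 then 0
      else (if i = 1 then -1 - l else if i = N - 1 then -1 + l else -1) * pS N l (i - 1) j)
      + 2 * pS N l i j
      + (if i + 1 < N then
          (if i = 0 then -1 + l else if i = N - 2 then -1 - l else -1) * pS N l (i + 1) j else 0)
    = (if j = 0 then 0
      else pS N l i (j - 1) * (if j = 1 then -1 - l else if j = N - 1 then -1 + l else -1))
      + pS N l i j * 2
      + (if j + 1 < N then
          pS N l i (j + 1) * (if j = 0 then -1 + l else if j = N - 2 then -1 - l else -1) else 0) := by
  by_cases h2 : i + j = N - 2
  · have z1 : (if i = 0 then (0:ℝ)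
        else (if i = 1 then -1 - l else if i = N - 1 then -1 + l else -1) * pS N l (i - 1) j) = 0 := by
      rcases Nat.eq_zero_or_pos i with h | h
      · simp [h]
      · rw [if_neg (by omega), pS_zero N l (i - 1) j (by omega) (by omega), mul_zero]
    have z2 : (if i + 1 < N then
        (if i = 0 then -1 + l else if i = N - 2 then -1 - l else -1) * pS N l (i + 1) j else (0:ℝ)) = 0 := by
      by_cases hc : i + 1 < N
      · rw [if_pos hc, pS_zero N l (i + 1) j (by omega) (by omega), mul_zero]
      · rw [if_neg hc]
    have z3 : (if j = 0 then (0:ℝ)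
        else pS N l i (j - 1) * (if j = 1 then -1 - l else if j = N - 1 then -1 + l else -1)) = 0 := by
      rcases Nat.eq_zero_or_pos j with h | h
      · simp [h]
      · rw [if_neg (by omega), pS_zero N l i (j - 1) (by omega) (by omega), zero_mul]
    have z4 : (if j + 1 < N then
        pS N l i (j + 1) * (if j = 0 then -1 + l else if j = N - 2 then -1 - l else -1) else (0:ℝ)) = 0 := by
      by_cases hc : j + 1 < N
      · rw [if_pos hc, pS_zero N l i (j + 1) (by omega) (by omega), zero_mul]
      · rw [if_neg hc]
    rw [z1, z2, z3, z4, pS_lo N l i j h2]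
    ring
  · by_cases h0 : i + j = N
    · have z1 : (if i = 0 then (0:ℝ)
          else (if i = 1 then -1 - l else if i = N - 1 then -1 + l else -1) * pS N l (i - 1) j) = 0 := by
        rcases Nat.eq_zero_or_pos i with h | h
        · simp [h]
        · rw [if_neg (by omega), pS_zero N l (i - 1) j (by omega) (by omega), mul_zero]
      have z2 : (if i + 1 < N then
          (if i = 0 then -1 + l else if i = N - 2 then -1 - l else -1) * pS N l (i + 1) j else (0:ℝ)) = 0 := by
        by_cases hc : i + 1 < N
        · rw [if_pos hc, pS_zero N l (i + 1) j (by omega) (by omega), mul_zero]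
        · rw [if_neg hc]
      have z3 : (if j = 0 then (0:ℝ)
          else pS N l i (j - 1) * (if j = 1 then -1 - l else if j = N - 1 then -1 + l else -1)) = 0 := by
        rcases Nat.eq_zero_or_pos j with h | h
        · simp [h]
        · rw [if_neg (by omega), pS_zero N l i (j - 1) (by omega) (by omega), zero_mul]
      have z4 : (if j + 1 < N then
          pS N l i (j + 1) * (if j = 0 then -1 + l else if j = N - 2 then -1 - l else -1) else (0:ℝ)) = 0 := by
        by_cases hc : j + 1 < N
        · rw [if_pos hc, pS_zero N l i (j + 1) (by omega) (by omega), zero_mul]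
        · rw [if_neg hc]
      rw [z1, z2, z3, z4, pS_hi N hN l i j h0]
      ring
    · by_cases h1 : i + j = N - 1
      · have c1 : (if i = 0 then (0:ℝ)
            else (if i = 1 then -1 - l else if i = N - 1 then -1 + l else -1) * pS N l (i - 1) j)
            = (if i = 0 then 0
            else (if i = 1 then -1 - l else if i = N - 1 then -1 + l else -1)
              * (if i - 1 = 0 ∨ j = 0 then 1 - l else 1)) := by
          rcases Nat.eq_zero_or_pos i with h | h
          · simp [h]
          · rw [pS_lo N l (i - 1) j (by omega)]
        have c2 : (if i + 1 < N then
            (if i = 0 then -1 + l else if i = N - 2 then -1 - l else -1) * pS N l (i + 1) j else (0:ℝ))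
            = (if i + 1 < N then
            (if i = 0 then -1 + l else if i = N - 2 then -1 - l else -1)
              * (if i + 1 = N - 1 ∨ j = N - 1 then 1 - l else 1) else 0) := by
          by_cases hc : i + 1 < N
          · rw [if_pos hc, if_pos hc, pS_hi N hN l (i + 1) j (by omega)]
          · rw [if_neg hc, if_neg hc]
        have c3 : (if j = 0 then (0:ℝ)
            else pS N l i (j - 1) * (if j = 1 then -1 - l else if j = N - 1 then -1 + l else -1))
            = (if j = 0 then 0
            else (if i = 0 ∨ j - 1 = 0 then 1 - l else 1)
              * (if j = 1 then -1 - l else if j = N - 1 then -1 + l else -1)) := by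
          rcases Nat.eq_zero_or_pos j with h | h
          · simp [h]
          · rw [pS_lo N l i (j - 1) (by omega)]
        have c4 : (if j + 1 < N then
            pS N l i (j + 1) * (if j = 0 then -1 + l else if j = N - 2 then -1 - l else -1) else (0:ℝ))
            = (if j + 1 < N then
            (if i = N - 1 ∨ j + 1 = N - 1 then 1 - l else 1)
              * (if j = 0 then -1 + l else if j = N - 2 then -1 - l else -1) else 0) := by
          by_cases hc : j + 1 < N
          · rw [if_pos hc, if_pos hc, pS_hi N hN l i (j + 1) (by omega)]
          · rw [if_neg hc, if_neg hc]
        rw [c1, c2, c3, c4, pS_zero N l i j (by omega) (by omega)]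
        split_ifs <;> first | omega | (simp only [false_or, or_false] at *; omega) | ring
      · by_cases h3 : i + j = N - 3
        · have z1 : (if i = 0 then (0:ℝ)
              else (if i = 1 then -1 - l else if i = N - 1 then -1 + l else -1) * pS N l (i - 1) j) = 0 := by
            rcases Nat.eq_zero_or_pos i with h | h
            · simp [h]
            · rw [if_neg (by omega), pS_zero N l (i - 1) j (by omega) (by omega), mul_zero]
          have z3 : (if j = 0 then (0:ℝ)
              else pS N l i (j - 1) * (if j = 1 then -1 - l else if j = N - 1 then -1 + l else -1)) = 0 := by
            rcases Nat.eq_zero_or_pos j with h | h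
            · simp [h]
            · rw [if_neg (by omega), pS_zero N l i (j - 1) (by omega) (by omega), zero_mul]
          have c2 : (if i + 1 < N then
              (if i = 0 then -1 + l else if i = N - 2 then -1 - l else -1) * pS N l (i + 1) j else (0:ℝ))
              = (if i + 1 < N then
              (if i = 0 then -1 + l else if i = N - 2 then -1 - l else -1)
                * (if i + 1 = 0 ∨ j = 0 then 1 - l else 1) else 0) := by
            by_cases hc : i + 1 < N
            · rw [if_pos hc, if_pos hc, pS_lo N l (i + 1) j (by omega)]
            · rw [if_neg hc, if_neg hc]
          have c4 : (if j + 1 < N then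
              pS N l i (j + 1) * (if j = 0 then -1 + l else if j = N - 2 then -1 - l else -1) else (0:ℝ))
              = (if j + 1 < N then
              (if i = 0 ∨ j + 1 = 0 then 1 - l else 1)
                * (if j = 0 then -1 + l else if j = N - 2 then -1 - l else -1) else 0) := by
            by_cases hc : j + 1 < N
            · rw [if_pos hc, if_pos hc, pS_lo N l i (j + 1) (by omega)]
            · rw [if_neg hc, if_neg hc]
          rw [z1, z3, c2, c4, pS_zero N l i j (by omega) (by omega)]
          split_ifs <;> first | omega | (simp only [false_or, or_false] at *; omega) | ring
        · by_cases h4 : i + j = N + 1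
          · have z2 : (if i + 1 < N then
                (if i = 0 then -1 + l else if i = N - 2 then -1 - l else -1) * pS N l (i + 1) j else (0:ℝ)) = 0 := by
              by_cases hc : i + 1 < N
              · rw [if_pos hc, pS_zero N l (i + 1) j (by omega) (by omega), mul_zero]
              · rw [if_neg hc]
            have z4 : (if j + 1 < N then
                pS N l i (j + 1) * (if j = 0 then -1 + l else if j = N - 2 then -1 - l else -1) else (0:ℝ)) = 0 := by
              by_cases hc : j + 1 < N
              · rw [if_pos hc, pS_zero N l i (j + 1) (by omega) (by omega), zero_mul]
              · rw [if_neg hc]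
            have c1 : (if i = 0 then (0:ℝ)
                else (if i = 1 then -1 - l else if i = N - 1 then -1 + l else -1) * pS N l (i - 1) j)
                = (if i = 0 then 0
                else (if i = 1 then -1 - l else if i = N - 1 then -1 + l else -1)
                  * (if i - 1 = N - 1 ∨ j = N - 1 then 1 - l else 1)) := by
              rcases Nat.eq_zero_or_pos i with h | h
              · simp [h]
              · rw [pS_hi N hN l (i - 1) j (by omega)]
            have c3 : (if j = 0 then (0:ℝ)
                else pS N l i (j - 1) * (if j = 1 then -1 - l else if j = N - 1 then -1 + l else -1))
                = (if j = 0 then 0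
                else (if i = N - 1 ∨ j - 1 = N - 1 then 1 - l else 1)
                  * (if j = 1 then -1 - l else if j = N - 1 then -1 + l else -1)) := by
              rcases Nat.eq_zero_or_pos j with h | h
              · simp [h]
              · rw [pS_hi N hN l i (j - 1) (by omega)]
            rw [z2, z4, c1, c3, pS_zero N l i j (by omega) (by omega)]
            split_ifs <;> first | omega | (simp only [false_or, or_false] at *; omega) | ring
          · have z1 : (if i = 0 then (0:ℝ)
                else (if i = 1 then -1 - l else if i = N - 1 then -1 + l else -1) * pS N l (i - 1) j) = 0 := by
              rcases Nat.eq_zero_or_pos i with h | h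
              · simp [h]
              · rw [if_neg (by omega), pS_zero N l (i - 1) j (by omega) (by omega), mul_zero]
            have z2 : (if i + 1 < N then
                (if i = 0 then -1 + l else if i = N - 2 then -1 - l else -1) * pS N l (i + 1) j else (0:ℝ)) = 0 := by
              by_cases hc : i + 1 < N
              · rw [if_pos hc, pS_zero N l (i + 1) j (by omega) (by omega), mul_zero]
              · rw [if_neg hc]
            have z3 : (if j = 0 then (0:ℝ)
                else pS N l i (j - 1) * (if j = 1 then -1 - l else if j = N - 1 then -1 + l else -1)) = 0 := by
              rcases Nat.eq_zero_or_pos j with h | h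
              · simp [h]
              · rw [if_neg (by omega), pS_zero N l i (j - 1) (by omega) (by omega), zero_mul]
            have z4 : (if j + 1 < N then
                pS N l i (j + 1) * (if j = 0 then -1 + l else if j = N - 2 then -1 - l else -1) else (0:ℝ)) = 0 := by
              by_cases hc : j + 1 < N
              · rw [if_pos hc, pS_zero N l i (j + 1) (by omega) (by omega), zero_mul]
              · rw [if_neg hc]
            rw [z1, z2, z3, z4, pS_zero N l i j (by omega) (by omega)]
            ring

lemma final (N : ℕ) (hN : 3 ≤ N) (l : ℝ) (i j : ℕ) (hi : i < N) (hj : j < N) :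
    (if i = 0 then 0 else hS N l (i - 1) i * pS N l (i - 1) j)
      + hS N l i i * pS N l i j
      + (if i + 1 < N then hS N l (i + 1) i * pS N l (i + 1) j else 0)
    = (if j = 0 then 0 else pS N l i (j - 1) * hS N l (j - 1) j)
      + pS N l i j * hS N l j j
      + (if j + 1 < N then pS N l i (j + 1) * hS N l (j + 1) j else 0) := by
  rw [hS_diag, hS_diag, hS_B N hN l i, hS_B N hN l j]
  have gA1 : (if i = 0 then (0:ℝ) else hS N l (i - 1) i * pS N l (i - 1) j)
      = (if i = 0 then 0
        else (if i = 1 then -1 - l else if i = N - 1 then -1 + l else -1) * pS N l (i - 1) j) := by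
    rcases Nat.eq_zero_or_pos i with h | h
    · simp [h]
    · rw [hS_A N hN l i h]
  have gA2 : (if j = 0 then (0:ℝ) else pS N l i (j - 1) * hS N l (j - 1) j)
      = (if j = 0 then 0
        else pS N l i (j - 1) * (if j = 1 then -1 - l else if j = N - 1 then -1 + l else -1)) := by
    rcases Nat.eq_zero_or_pos j with h | h
    · simp [h]
    · rw [hS_A N hN l j h]
  rw [gA1, gA2]
  exact final' N hN l i j hi hj

theorem stmt9 (N : ℕ) (hN : 3 ≤ N) (l : ℝ) (hl : l ∈ Set.Ioo (-1 : ℝ) 1) :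
    (Ham N l)ᵀ * Pantibi N l = Pantibi N l * Ham N l := by
  ext i j
  have L : ((Ham N l)ᵀ * Pantibi N l) i j
      = ∑ k ∈ Finset.range N, hS N l k ↑i * pS N l k ↑j := by
    rw [Matrix.mul_apply, ← Fin.sum_univ_eq_sum_range (fun k => hS N l k ↑i * pS N l k ↑j) N]
    exact Finset.sum_congr rfl fun k _ => rfl
  have R : (Pantibi N l * Ham N l) i j
      = ∑ k ∈ Finset.range N, pS N l ↑i k * hS N l k ↑j := by
    rw [Matrix.mul_apply, ← Fin.sum_univ_eq_sum_range (fun k => pS N l ↑i k * hS N l k ↑j) N]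
    exact Finset.sum_congr rfl fun k _ => rfl
  rw [L, R,
    tri_sum N hN _ ↑i i.isLt (fun k _ h1 h2 h3 => by rw [hS_zero N l h1 h2 h3, zero_mul]),
    tri_sum N hN _ ↑j j.isLt (fun k _ h1 h2 h3 => by rw [hS_zero N l h1 h2 h3, mul_zero])]
  exact final N hN l ↑i ↑j i.isLt j.isLt
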